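/- Let Ω ⊆ ℍ be a symmetric slice domain and f : Ω → ℍ a slice regular function such that f(Ω ∩ L_I) ⊆ L_I for all I ∈ S. If f(x₀ + y₀I₀) = 0 for some I₀ ∈ S, then f(x₀ + y₀I) = 0 for all I ∈ S. -/

import Mathlib

noncomputable section

abbrev H := Quaternion ℝ

/-- The sphere of quaternion imaginary units. -/
def Sph : Set H := {q : H | q ^ 2 = -1}

/-- The complex line (Slice) through 1 and `I`. -/
def Slice (I : H) : Set H := {q : H | ∃ x y : ℝ, q = (x : H) + y • I}

/-- The 2-sphere `x + y𝕊`. -/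
def sphSet (x y : ℝ) : Set H := {q : H | ∃ I ∈ Sph, q = (x : H) + y • I}

/-- The real axis inside the quaternions. -/
def realAxis : Set H := {q : H | ∃ r : ℝ, q = (r : H)}

/-- `f` is holomorphic on the `I`-Slice of `Ω`: at every point of `Ω ∩ L_I` the
map `(x,y) ↦ f(x+yI)` is (real) differentiable and satisfies the
Cauchy–Riemann equation `∂f/∂x + I ∂f/∂y = 0`. -/
def HoloSlice (Ω : Set H) (f : H → H) (I : H) : Prop :=
  ∀ x y : ℝ, (x : H) + y • I ∈ Ω →
    DifferentiableAt ℝ (fun p : ℝ × ℝ => f ((p.1 : H) + p.2 • I)) (x, y) ∧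
    fderiv ℝ (fun p : ℝ × ℝ => f ((p.1 : H) + p.2 • I)) (x, y) (1, 0)
      + I * fderiv ℝ (fun p : ℝ × ℝ => f ((p.1 : H) + p.2 • I)) (x, y) (0, 1) = 0

/-- Slice regular functions: every Slice restriction is holomorphic. -/
def SliceRegular (Ω : Set H) (f : H → H) : Prop :=
  ∀ I ∈ Sph, HoloSlice Ω f I

/-- A Slice domain: a domain intersecting the real axis whose slices are domains. -/
def IsSliceDomain (Ω : Set H) : Prop :=
  IsOpen Ω ∧ IsConnected Ω ∧ (Ω ∩ realAxis).Nonempty ∧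
  ∀ I ∈ Sph, IsConnected (Ω ∩ Slice I)

/-- Axially symmetric set. -/
def AxSymm (C : Set H) : Prop :=
  ∀ (x y : ℝ), ∀ I ∈ Sph, (x : H) + y • I ∈ C → ∀ J ∈ Sph, (x : H) + y • J ∈ C

/-- Symmetric Slice domain. -/
def IsSymmSliceDomain (Ω : Set H) : Prop := IsSliceDomain Ω ∧ AxSymm Ω

/-- Orthogonality of quaternions w.r.t. the Euclidean inner product `re (p * star q)`. -/
def Orth (I J : H) : Prop := (I * star J).re = 0

/-- `F, G` give a splitting `f = F + G J` of `f` on the Slice `Ω ∩ L_I`,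
with `F, G` holomorphic and `L_I`-valued. -/
structure IsSplitting (Ω : Set H) (f : H → H) (I J : H) (F G : H → H) : Prop where
  mapsF : ∀ q ∈ Ω ∩ Slice I, F q ∈ Slice I
  mapsG : ∀ q ∈ Ω ∩ Slice I, G q ∈ Slice I
  holoF : HoloSlice Ω F I
  holoG : HoloSlice Ω G I
  eq : ∀ q ∈ Ω ∩ Slice I, f q = F q + G q * J

/-- `h` is the regular product `f * g`: it is Slice regular and restricts on some
Slice `L_I` (with `I ⊥ J`, splittings `f = F + GJ`, `g = F' + G'J`) to the
product formula.  (Note `star` is quaternionic conjugation, which restricts to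
complex conjugation on each Slice.) -/
def IsRegularProduct (Ω : Set H) (f g h : H → H) : Prop :=
  SliceRegular Ω h ∧
  ∃ I ∈ Sph, ∃ J ∈ Sph, Orth I J ∧
    ∃ F G F' G' : H → H, IsSplitting Ω f I J F G ∧ IsSplitting Ω g I J F' G' ∧
      ∀ q ∈ Ω ∩ Slice I,
        h q = (F q * F' q - G q * star (G' (star q)))
            + (F q * G' q + G q * star (F' (star q))) * J

/-- `fc` is the regular conjugate of `f`. -/
def IsRegularConj (Ω : Set H) (f fc : H → H) : Prop :=
  SliceRegular Ω fc ∧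
  ∃ I ∈ Sph, ∃ J ∈ Sph, Orth I J ∧
    ∃ F G : H → H, IsSplitting Ω f I J F G ∧
      ∀ q ∈ Ω ∩ Slice I, fc q = star (F (star q)) - G q * J

/-- `fs` is the symmetrization `f^s = f * f^c` of `f`. -/
def IsSymmetrization (Ω : Set H) (f fs : H → H) : Prop :=
  ∃ fc : H → H, IsRegularConj Ω f fc ∧ IsRegularProduct Ω f fc fs

/-- The degenerate set of `f`: union of the spheres `x + y𝕊` (`y ≠ 0`)
contained in `Ω` on which `f` is constant. -/
def DegSet (Ω : Set H) (f : H → H) : Set H :=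
  {q : H | ∃ x y : ℝ, y ≠ 0 ∧ q ∈ sphSet x y ∧ sphSet x y ⊆ Ω ∧
    ∀ p ∈ sphSet x y, ∀ p' ∈ sphSet x y, f p = f p'}


section Aux

open Complex Filter Set Topology

/-- The slice embedding `ℂ → ℍ` sending `i` to `I`. -/
def psiF (I : H) (z : ℂ) : H := (z.re : H) + z.im • I

/-- The slice projection `ℍ → ℂ` (left inverse of `psiF I` for `I ∈ Sph`). -/
def piF (I : H) (q : H) : ℂ := (q.re : ℂ) + ((-((q * I).re) : ℝ) : ℂ) * Complex.I

lemma sph_mul_self {I : H} (hI : I ∈ Sph) : I * I = -1 := by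
  have h : I ^ 2 = -1 := hI
  rwa [sq] at h

lemma sph_re {I : H} (hI : I ∈ Sph) : I.re = 0 := by
  have h : I * I = -1 := sph_mul_self hI
  have h1 : I.re * I.re - I.imI * I.imI - I.imJ * I.imJ - I.imK * I.imK = -1 := by
    have := congrArg QuaternionAlgebra.re h
    simpa [Quaternion.re_mul, Quaternion.re_one] using this
  have hb : I.re * I.imI = 0 := by
    have := congrArg QuaternionAlgebra.imI h
    simp only [Quaternion.imI_mul, Quaternion.imI_neg, Quaternion.imI_one, neg_zero] at this
    nlinarith [this]
  have hc : I.re * I.imJ = 0 := by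
    have := congrArg QuaternionAlgebra.imJ h
    simp only [Quaternion.imJ_mul, Quaternion.imJ_neg, Quaternion.imJ_one, neg_zero] at this
    nlinarith [this]
  have hd : I.re * I.imK = 0 := by
    have := congrArg QuaternionAlgebra.imK h
    simp only [Quaternion.imK_mul, Quaternion.imK_neg, Quaternion.imK_one, neg_zero] at this
    nlinarith [this]
  have key : I.re ^ 2 * (I.re ^ 2 + 1) = 0 := by nlinarith [hb, hc, hd, h1]
  have h2 : I.re ^ 2 = 0 := by nlinarith [sq_nonneg I.re]
  exact (pow_eq_zero_iff two_ne_zero).mp h2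

lemma sph_norm {I : H} (hI : I ∈ Sph) :
    I.imI * I.imI + I.imJ * I.imJ + I.imK * I.imK = 1 := by
  have h1 : I.re * I.re - I.imI * I.imI - I.imJ * I.imJ - I.imK * I.imK = -1 := by
    have := congrArg QuaternionAlgebra.re (sph_mul_self hI)
    simpa [Quaternion.re_mul, Quaternion.re_one] using this
  have h0 := sph_re hI
  nlinarith [h1, h0]

lemma psiF_add (I : H) (z w : ℂ) : psiF I (z + w) = psiF I z + psiF I w := by
  ext <;> simp [psiF] <;> ring

lemma psiF_smul (I : H) (r : ℝ) (z : ℂ) : psiF I (r • z) = r • psiF I z := by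
  ext <;> simp [psiF, Complex.smul_re, Complex.smul_im] <;> ring

/-- `psiF I` as a continuous `ℝ`-linear map. -/
def psiL (I : H) : ℂ →L[ℝ] H :=
  LinearMap.toContinuousLinearMap
    { toFun := psiF I
      map_add' := psiF_add I
      map_smul' := psiF_smul I }

@[simp] lemma psiL_apply (I : H) (z : ℂ) : psiL I z = psiF I z := rfl

lemma piF_add (I : H) (p q : H) : piF I (p + q) = piF I p + piF I q := by
  apply Complex.ext <;> simp [piF, add_mul] <;> ring

lemma piF_smul (I : H) (r : ℝ) (q : H) : piF I (r • q) = r • piF I q := by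
  apply Complex.ext <;>
    simp [piF, Complex.smul_re, Complex.smul_im, Quaternion.re_smul, smul_mul_assoc] <;> ring

/-- `piF I` as a continuous `ℝ`-linear map. -/
def piL (I : H) : H →L[ℝ] ℂ :=
  LinearMap.toContinuousLinearMap
    { toFun := piF I
      map_add' := piF_add I
      map_smul' := piF_smul I }

@[simp] lemma piL_apply (I : H) (q : H) : piL I q = piF I q := rfl

lemma piF_psiF {I : H} (hI : I ∈ Sph) (z : ℂ) : piF I (psiF I z) = z := by
  have h0 := sph_re hI
  have hn := sph_norm hI
  apply Complex.ext <;>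
    simp [piF, psiF, Quaternion.re_mul, h0] <;>
    (first | ring1 | linear_combination z.im * hn | linear_combination (-z.im) * hn | linear_combination z.re * hn | linear_combination (-z.re) * hn)

lemma psiF_mem_slice (I : H) (z : ℂ) : psiF I z ∈ Slice I := ⟨z.re, z.im, rfl⟩

lemma psiF_piF {I : H} (hI : I ∈ Sph) {q : H} (hq : q ∈ Slice I) :
    psiF I (piF I q) = q := by
  obtain ⟨x, y, rfl⟩ := hq
  have h : ((x : H) + y • I) = psiF I (⟨x, y⟩ : ℂ) := rfl
  rw [h, piF_psiF hI]

lemma mul_psiF {I : H} (hI : I ∈ Sph) (z : ℂ) :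
    I * psiF I z = psiF I (Complex.I * z) := by
  have h0 := sph_re hI
  have hn := sph_norm hI
  ext <;>
    simp [psiF, Quaternion.re_mul, Quaternion.imI_mul, Quaternion.imJ_mul,
      Quaternion.imK_mul, h0] <;>
    (first | ring1 | linear_combination z.im * hn | linear_combination (-z.im) * hn | linear_combination z.re * hn | linear_combination (-z.re) * hn)

lemma psiF_real (I : H) (x : ℝ) : psiF I ((x : ℝ) : ℂ) = (x : H) := by
  simp [psiF]

@[simp] lemma psiF_zero (I : H) : psiF I 0 = 0 := by simp [psiF]

lemma piF_real {I : H} (hI : I ∈ Sph) (c : ℝ) : piF I ((c : ℝ) : H) = (c : ℂ) := by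
  have h0 := sph_re hI
  apply Complex.ext <;> simp [piF, Quaternion.re_mul, h0]

@[simp] lemma piF_zero (I : H) : piF I 0 = 0 := by
  apply Complex.ext <;> simp [piF, Quaternion.re_zero]

/-- The key analytic step: on a slice preserved by `f`, the coordinate function is
`ℂ`-differentiable. -/
lemma g_diffAt {Ω : Set H} (hΩo : IsOpen Ω) {f : H → H} {I : H} (hI : I ∈ Sph)
    (hholo : HoloSlice Ω f I) (hpres : ∀ q ∈ Ω ∩ Slice I, f q ∈ Slice I)
    {z : ℂ} (hz : psiF I z ∈ Ω) :
    DifferentiableAt ℂ (fun w : ℂ => piF I (f (psiF I w))) z := by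
  have hII := sph_mul_self hI
  set h : ℝ × ℝ → H := fun p => f ((p.1 : H) + p.2 • I) with hh
  have hz' : ((z.re : H) + z.im • I) ∈ Ω := hz
  obtain ⟨hdiff, hCR⟩ := hholo z.re z.im hz'
  set Dh := fderiv ℝ h (z.re, z.im) with hDhdef
  have hDh : HasFDerivAt h Dh (z.re, z.im) := hdiff.hasFDerivAt
  -- h eventually maps into Slice I, so Dh lands in Slice I
  have hev : (fun p => psiF I (piF I (h p))) =ᶠ[𝓝 (z.re, z.im)] h := by
    have hcont : Continuous fun p : ℝ × ℝ => (p.1 : H) + p.2 • I :=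
      ((Quaternion.continuous_coe.comp continuous_fst).add
        (continuous_snd.smul continuous_const))
    have hmem : ∀ᶠ p in 𝓝 (z.re, z.im), ((p.1 : H) + p.2 • I) ∈ Ω :=
      hcont.continuousAt.preimage_mem_nhds (hΩo.mem_nhds hz')
    filter_upwards [hmem] with p hp
    exact psiF_piF hI (hpres _ ⟨hp, ⟨p.1, p.2, rfl⟩⟩)
  have hDh' : HasFDerivAt h (((psiL I).comp (piL I)).comp Dh) (z.re, z.im) :=
    ((((psiL I).comp (piL I)).hasFDerivAt.comp _ hDh)).congr_of_eventuallyEq hev.symm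
  have hkey : Dh = ((psiL I).comp (piL I)).comp Dh := hDh.unique hDh'
  have hw : Dh (1, 0) = psiF I (piF I (Dh (1, 0))) := by
    conv_lhs => rw [hkey]
    rfl
  have hCR' : Dh (1, 0) + I * Dh (0, 1) = 0 := hCR
  have hD01 : Dh (0, 1) = I * Dh (1, 0) := by
    have h10 : Dh (1, 0) = -(I * Dh (0, 1)) := eq_neg_of_add_eq_zero_left hCR'
    calc Dh (0, 1) = -(-1 : H) * Dh (0, 1) := by simp
      _ = -(I * I) * Dh (0, 1) := by rw [hII]
      _ = I * -(I * Dh (0, 1)) := by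
          rw [neg_mul, mul_assoc, mul_neg]
      _ = I * Dh (1, 0) := by rw [← h10]
  set c : ℂ := piF I (Dh (1, 0)) with hc
  -- the real derivative is the restriction of multiplication by c
  have hres : ((c • (1 : ℂ →L[ℂ] ℂ)).restrictScalars ℝ)
      = (piL I).comp (Dh.comp (Complex.reCLM.prod Complex.imCLM)) := by
    apply ContinuousLinearMap.ext
    intro w
    have hdec : Dh (w.re, w.im) = w.re • Dh (1, 0) + w.im • Dh (0, 1) := by
      have hpt : ((w.re, w.im) : ℝ × ℝ)
          = w.re • ((1 : ℝ), (0 : ℝ)) + w.im • ((0 : ℝ), (1 : ℝ)) := by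
        simp [Prod.ext_iff]
      rw [hpt, map_add, map_smul, map_smul]
    have hval : Dh (w.re, w.im) = psiF I (w * c) := by
      rw [hdec, hD01, hw]
      rw [mul_psiF hI]
      rw [← psiF_smul, ← psiF_smul, ← psiF_add]
      congr 1
      rw [Complex.real_smul, Complex.real_smul]
      conv_rhs => rw [← Complex.re_add_im w]
      ring
    have : (piL I) (Dh (w.re, w.im)) = w * c := by
      rw [hval]
      simpa using piF_psiF hI (w * c)
    simpa [ContinuousLinearMap.restrictScalars, mul_comm] using this.symm
  have hcomp : HasFDerivAt (fun w : ℂ => piF I (f (psiF I w)))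
      ((piL I).comp (Dh.comp (Complex.reCLM.prod Complex.imCLM))) z := by
    have h1 : HasFDerivAt (fun w : ℂ => ((w.re, w.im) : ℝ × ℝ))
        (Complex.reCLM.prod Complex.imCLM) z :=
      (Complex.reCLM.prod Complex.imCLM).hasFDerivAt
    have h2 : HasFDerivAt (fun w : ℂ => h (w.re, w.im))
        (Dh.comp (Complex.reCLM.prod Complex.imCLM)) z := HasFDerivAt.comp (g := h) z hDh h1
    exact (piL I).hasFDerivAt.comp z h2
  have : HasFDerivAt (fun w : ℂ => piF I (f (psiF I w))) (c • (1 : ℂ →L[ℂ] ℂ)) z :=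
    hasFDerivAt_of_restrictScalars ℝ hcomp hres
  exact this.differentiableAt

end Aux

lemma u1_mem : (⟨0, 1, 0, 0⟩ : H) ∈ Sph := by
  show (⟨0, 1, 0, 0⟩ : H) ^ 2 = -1
  erw [sq]
  ext <;> simp [Quaternion.re_mul, Quaternion.imI_mul, Quaternion.imJ_mul, Quaternion.imK_mul]

lemma u2_mem : (⟨0, 0, 1, 0⟩ : H) ∈ Sph := by
  show (⟨0, 0, 1, 0⟩ : H) ^ 2 = -1
  erw [sq]
  ext <;> simp [Quaternion.re_mul, Quaternion.imI_mul, Quaternion.imJ_mul, Quaternion.imK_mul]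

lemma f_real_on_real {Ω : Set H} {f : H → H}
    (hpres : ∀ I ∈ Sph, ∀ q ∈ Ω ∩ Slice I, f q ∈ Slice I)
    (x : ℝ) (hx : (x : H) ∈ Ω) : f ((x : H)) = (((f ((x : H))).re : ℝ) : H) := by
  obtain ⟨a, b, h1⟩ := hpres _ u1_mem ((x : H)) ⟨hx, x, 0, by simp; exact zero_smul _ _⟩
  obtain ⟨c, d, h2⟩ := hpres _ u2_mem ((x : H)) ⟨hx, x, 0, by simp; exact zero_smul _ _⟩
  ext
  · simp
  · rw [h2]; simp; exact mul_zero _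
  · rw [h1]; simp; exact mul_zero _
  · rw [h1]; simp; exact mul_zero _

/-- if `f` preserves every slice and vanishes at `x₀ + y₀I₀`,
then it vanishes at `x₀ + y₀I` for every `I ∈ 𝕊`. -/
theorem slice_preserving_zero_spreads (Ω : Set H) (hΩ : IsSymmSliceDomain Ω)
    (f : H → H) (hf : SliceRegular Ω f)
    (hpres : ∀ I ∈ Sph, ∀ q ∈ Ω ∩ Slice I, f q ∈ Slice I)
    (x₀ y₀ : ℝ) (I₀ : H) (hI₀ : I₀ ∈ Sph) (hmem : (x₀ : H) + y₀ • I₀ ∈ Ω)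
    (hz : f ((x₀ : H) + y₀ • I₀) = 0) :
    ∀ I ∈ Sph, f ((x₀ : H) + y₀ • I) = 0 := by
  obtain ⟨⟨hopen, -, ⟨q0, hq0, r, hq0r⟩, hslices⟩, hsymm⟩ := hΩ
  intro I hI
  set D : Set ℂ := (psiF I₀) ⁻¹' Ω with hD
  have hDmem : ∀ z : ℂ, z ∈ D → ∀ J ∈ Sph, psiF J z ∈ Ω := by
    intro z hz J hJ
    exact hsymm z.re z.im I₀ hI₀ hz J hJ
  have hDopen : IsOpen D :=
    hopen.preimage (show Continuous (psiF I₀) from (psiL I₀).continuous)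
  have hinj : Function.Injective (psiF I₀) := fun a b hab => by
    have := congrArg (piF I₀) hab
    rwa [piF_psiF hI₀, piF_psiF hI₀] at this
  obtain ⟨K, -, hanti⟩ :=
    (LinearMap.injective_iff_antilipschitz ((psiL I₀) : ℂ →ₗ[ℝ] H)).mp hinj
  have hclosed := hanti.isClosedEmbedding (psiL I₀).uniformContinuous
  have himg : psiF I₀ '' D = Ω ∩ Slice I₀ := by
    apply subset_antisymm
    · rintro q ⟨z, hz', rfl⟩
      exact ⟨hz', psiF_mem_slice I₀ z⟩
    · rintro q ⟨hq, x, y, rfl⟩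
      exact ⟨⟨x, y⟩, hq, rfl⟩
  have hpre : IsPreconnected D := by
    have hconn := (hslices I₀ hI₀).isPreconnected
    rw [← himg] at hconn
    exact hclosed.isInducing.isPreconnected_image.mp hconn
  have hana : ∀ J ∈ Sph, AnalyticOnNhd ℂ (fun z => piF J (f (psiF J z))) D := by
    intro J hJ
    refine DifferentiableOn.analyticOnNhd (fun z hz' => ?_) hDopen
    exact (g_diffAt hopen hJ (hf J hJ) (hpres J hJ) (hDmem z hz' J hJ)).differentiableWithinAt
  have hrD : ((r : ℝ) : ℂ) ∈ D := by
    show psiF I₀ _ ∈ Ω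
    rw [psiF_real, ← hq0r]
    exact hq0
  have hfreq : ∃ᶠ z in nhdsWithin ((r : ℝ) : ℂ) {((r : ℝ) : ℂ)}ᶜ,
      piF I (f (psiF I z)) = piF I₀ (f (psiF I₀ z)) := by
    have htend : Filter.Tendsto (fun t : ℝ => ((r + t : ℝ) : ℂ))
        (nhdsWithin (0 : ℝ) {(0 : ℝ)}ᶜ) (nhdsWithin ((r : ℝ) : ℂ) {((r : ℝ) : ℂ)}ᶜ) := by
      rw [tendsto_nhdsWithin_iff]
      constructor
      · have h1 : Filter.Tendsto (fun t : ℝ => ((r + t : ℝ) : ℂ)) (nhds 0)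
            (nhds ((r : ℝ) : ℂ)) := by
          have hcont : Continuous (fun t : ℝ => ((r + t : ℝ) : ℂ)) := by fun_prop
          have := hcont.tendsto (0 : ℝ)
          simpa using this
        exact h1.mono_left nhdsWithin_le_nhds
      · filter_upwards [self_mem_nhdsWithin] with t ht
        simp only [Set.mem_compl_iff, Set.mem_singleton_iff] at ht ⊢
        intro hc
        apply ht
        have := Complex.ofReal_injective hc
        linarith
    have hDev : ∀ᶠ t in nhdsWithin (0 : ℝ) {(0 : ℝ)}ᶜ, ((r + t : ℝ) : ℂ) ∈ D :=
      htend.eventually ((hDopen.eventually_mem hrD).filter_mono nhdsWithin_le_nhds)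
    have hev : ∀ᶠ t in nhdsWithin (0 : ℝ) {(0 : ℝ)}ᶜ,
        piF I (f (psiF I ((r + t : ℝ) : ℂ))) = piF I₀ (f (psiF I₀ ((r + t : ℝ) : ℂ))) := by
      filter_upwards [hDev] with t ht
      have hmem' : ((r + t : ℝ) : H) ∈ Ω := by
        have := hDmem _ ht I₀ hI₀
        rwa [psiF_real] at this
      have hreal := f_real_on_real hpres (r + t) hmem'
      rw [psiF_real, psiF_real, hreal, piF_real hI, piF_real hI₀]
    exact htend.frequently hev.frequently
  have heq := (hana I hI).eqOn_of_preconnected_of_frequently_eq (hana I₀ hI₀) hpre hrD hfreq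
  set z0 : ℂ := ⟨x₀, y₀⟩ with hz0
  have hz0D : z0 ∈ D := by
    show psiF I₀ z0 ∈ Ω
    exact hmem
  have h1 : piF I (f (psiF I z0)) = piF I₀ (f (psiF I₀ z0)) := heq hz0D
  have hfI : f (psiF I z0) ∈ Slice I :=
    hpres I hI _ ⟨hDmem z0 hz0D I hI, psiF_mem_slice I z0⟩
  have hfin : f (psiF I z0) = 0 := by
    have h2 : piF I₀ (f (psiF I₀ z0)) = 0 := by
      have h3 : psiF I₀ z0 = (x₀ : H) + y₀ • I₀ := rfl
      rw [h3, hz, piF_zero]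
    calc f (psiF I z0) = psiF I (piF I (f (psiF I z0))) := (psiF_piF hI hfI).symm
      _ = psiF I 0 := by rw [h1, h2]
      _ = 0 := psiF_zero I
  exact hfin
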